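/- Let n be a positive integer and let f : ℝ² → ℂ. Define I_n^* f(x) := Σ_{k ∈ X_n^*} f(k/(2n)) · Φ_n^*(x − k/(2n)). Then for every j ∈ X_n^*: (i) if |j₁| < n and |j₂| < n, then I_n^* f(j/(2n)) = f(j/(2n)); (ii) if exactly one of |j₁|, |j₂| equals n, then I_n^* f(j/(2n)) = f(j/(2n)) + f(j'/(2n)), where j' is the unique element of X_n^* with j' ≠ j and j' − j ∈ 2nℤ² (namely j' = j ± (2n,0) or j' = j ± (0,2n)); (iii) if |j₁| = |j₂| = n, then I_n^* f(j/(2n)) = f((n,n)/(2n)) + f((−n,n)/(2n)) + f((n,−n)/(2n)) + f((−n,−n)/(2n)). -/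

import Mathlib

open MeasureTheory Complex

attribute [local instance] Classical.propDecidable

/-- The exponential e_k(x) = exp(2 pi i (k1 x1 + k2 x2)). -/
noncomputable def e2 (k : ℤ × ℤ) (x : ℝ × ℝ) : ℂ :=
  Complex.exp (2 * Real.pi * Complex.I * ((k.1 : ℂ) * x.1 + (k.2 : ℂ) * x.2))

/-- The point k/(2n) in the plane. -/
noncomputable def pt2 (n : ℕ) (k : ℤ × ℤ) : ℝ × ℝ :=
  ((k.1 : ℝ) / (2 * n), (k.2 : ℝ) / (2 * n))

/-- Λ_m^* = {j : |j1+j2| ≤ m and |j1-j2| ≤ m}. -/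
noncomputable def LamStar (m : ℕ) : Finset (ℤ × ℤ) :=
  (Finset.Icc (-(m : ℤ), -(m : ℤ)) ((m : ℤ), (m : ℤ))).filter
    fun j => |j.1 + j.2| ≤ (m : ℤ) ∧ |j.1 - j.2| ≤ (m : ℤ)

/-- X_n^* = {k : k1 ≡ k2 (mod 2), |k_i| ≤ n}. -/
noncomputable def X2star (n : ℕ) : Finset (ℤ × ℤ) :=
  (Finset.Icc (-(n : ℤ), -(n : ℤ)) ((n : ℤ), (n : ℤ))).filter
    fun k => k.1 % 2 = k.2 % 2

/-- The weight c̃_ν on Λ_n^*. -/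
noncomputable def ctilde (n : ℕ) (ν : ℤ × ℤ) : ℝ :=
  if |ν.1 + ν.2| < (n : ℤ) ∧ |ν.1 - ν.2| < (n : ℤ) then 1
  else if |ν.1 + ν.2| = (n : ℤ) ∧ |ν.1 - ν.2| = (n : ℤ) then 1/4
  else 1/2

/-- Φ_n^*(x) = (1/(2n²)) Σ_{ν ∈ Λ_n^*} c̃_ν e_ν(x). -/
noncomputable def PhiStar (n : ℕ) (x : ℝ × ℝ) : ℂ :=
  (1 / (2 * (n : ℂ) ^ 2)) * ∑ ν ∈ LamStar n, (ctilde n ν : ℂ) * e2 ν x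

/-- I_n^* f(x) = Σ_{k ∈ X_n^*} f(k/(2n)) Φ_n^*(x - k/(2n)). -/
noncomputable def Istar2 (n : ℕ) (f : ℝ × ℝ → ℂ) (x : ℝ × ℝ) : ℂ :=
  ∑ k ∈ X2star n, f (pt2 n k) * PhiStar n (x - pt2 n k)

noncomputable def om (n : ℕ) : ℂ := Complex.exp (Real.pi * Complex.I / n)

lemma om_ne_zero (n : ℕ) : om n ≠ 0 := Complex.exp_ne_zero _

lemma om_zpow (n : ℕ) (m : ℤ) : om n ^ m = Complex.exp (m * (Real.pi * Complex.I / n)) := by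
  rw [om, ← Complex.exp_int_mul]

lemma e2_pt2 {n : ℕ} (hn : 0 < n) (k d : ℤ × ℤ) :
    e2 k (pt2 n d) = om n ^ (k.1 * d.1 + k.2 * d.2) := by
  rw [e2, pt2, om_zpow]
  congr 1
  have hn' : (n : ℂ) ≠ 0 := Nat.cast_ne_zero.mpr hn.ne'
  push_cast
  field_simp

noncomputable def wgt (n : ℕ) (u : ℤ) : ℂ := if u = n ∨ u = -n then 1/2 else 1

noncomputable def Fsum (n : ℕ) (ζ : ℂ) : ℂ := ∑ u ∈ Finset.Icc (-(n:ℤ)) n, wgt n u * ζ ^ u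

lemma sum_Icc_zpow (ζ : ℂ) (hζ : ζ ≠ 0) (a b : ℤ) :
    ∑ u ∈ Finset.Icc a b, ζ ^ u = ζ ^ a * ∑ i ∈ Finset.range (b + 1 - a).toNat, ζ ^ i := by
  rw [Finset.mul_sum]
  refine Finset.sum_nbij' (fun u => (u - a).toNat) (fun i => a + (i:ℤ)) ?_ ?_ ?_ ?_ ?_
  all_goals intro u hu
  · simp only [Finset.mem_Icc] at hu; simp only [Finset.mem_range]; omega
  · simp only [Finset.mem_range] at hu; simp only [Finset.mem_Icc]; omega
  · simp only [Finset.mem_Icc] at hu; show a + ((u - a).toNat : ℤ) = u; omega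
  · simp only [Finset.mem_range] at hu; show ((a + (u:ℤ) - a).toNat : ℕ) = u; omega
  · simp only [Finset.mem_Icc] at hu
    show ζ ^ u = ζ ^ a * ζ ^ ((u - a).toNat)
    rw [← zpow_natCast ζ, ← zpow_add₀ hζ]
    congr 1
    omega

lemma Fsum_eq {n : ℕ} (hn : 0 < n) (ζ : ℂ) (hζ : ζ ^ (2*n) = 1) :
    Fsum n ζ = if ζ = 1 then (2*(n:ℂ)) else 0 := by
  have hζ0 : ζ ≠ 0 := by
    intro h; rw [h, zero_pow (by omega)] at hζ; exact zero_ne_one hζ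
  have hinv : ζ ^ (-(n:ℤ)) = ζ ^ ((n:ℤ)) := by
    have h2 : ζ ^ ((n:ℤ)) * ζ ^ ((n:ℤ)) = 1 := by
      rw [← zpow_add₀ hζ0]
      rw [← zpow_natCast ζ (2*n)] at hζ
      rw [← hζ]; congr 1; push_cast; ring
    rw [zpow_neg]
    exact (eq_inv_of_mul_eq_one_left h2).symm
  have hset : Finset.Icc (-(n:ℤ)) n
      = insert (-(n:ℤ)) (insert ((n:ℤ)) (Finset.Icc (-(n:ℤ)+1) ((n:ℤ)-1))) := by
    ext u; simp only [Finset.mem_Icc, Finset.mem_insert]; omega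
  have hm1 : (n:ℤ) ∉ Finset.Icc (-(n:ℤ)+1) ((n:ℤ)-1) := by
    simp only [Finset.mem_Icc]; omega
  have hm2 : -(n:ℤ) ∉ insert ((n:ℤ)) (Finset.Icc (-(n:ℤ)+1) ((n:ℤ)-1)) := by
    simp only [Finset.mem_insert, Finset.mem_Icc]; omega
  have hw : ∀ u ∈ Finset.Icc (-(n:ℤ)+1) ((n:ℤ)-1), wgt n u * ζ ^ u = ζ ^ u := by
    intro u hu; simp only [Finset.mem_Icc] at hu
    rw [wgt, if_neg (by omega), one_mul]
  have hF : Fsum n ζ = ζ ^ ((n:ℤ)) + ∑ u ∈ Finset.Icc (-(n:ℤ)+1) ((n:ℤ)-1), ζ ^ u := by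
    rw [Fsum, hset, Finset.sum_insert hm2, Finset.sum_insert hm1, Finset.sum_congr rfl hw]
    rw [wgt, wgt, if_pos (by omega), if_pos (by left; rfl), hinv]
    ring
  by_cases hζ1 : ζ = 1
  · subst hζ1
    rw [if_pos rfl, hF]
    simp only [one_zpow, Finset.sum_const, nsmul_eq_mul, mul_one]
    rw [Int.card_Icc]
    have hc : (((n:ℤ) - 1 + 1 - (-(n:ℤ) + 1)).toNat : ℕ) = 2*n - 1 := by omega
    rw [hc]
    have : ((2*n - 1 : ℕ) : ℂ) = 2*(n:ℂ) - 1 := by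
      push_cast [Nat.cast_sub (by omega : 1 ≤ 2*n)]; ring
    rw [this]; ring
  · rw [if_neg hζ1, hF, sum_Icc_zpow ζ hζ0]
    have hc : (((n:ℤ) - 1 + 1 - (-(n:ℤ)+1)).toNat : ℕ) = 2*n - 1 := by omega
    rw [hc, geom_sum_eq hζ1]
    have hpow : ζ ^ (2*n - 1) = ζ⁻¹ := by
      have : ζ ^ (2*n - 1) * ζ = 1 := by
        rw [← pow_succ]; rw [(by omega : 2*n - 1 + 1 = 2*n)]; exact hζ
      field_simp at this ⊢
      linear_combination this
    rw [hpow]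
    have hz1 : ζ - 1 ≠ 0 := sub_ne_zero.mpr hζ1
    have hsplit : ζ ^ (-(n:ℤ)+1) = ζ ^ ((n:ℤ)) * ζ := by
      rw [zpow_add₀ hζ0, hinv, zpow_one]
    rw [hsplit]
    field_simp
    ring

lemma ctilde_eq_wgt {n : ℕ} (ν : ℤ × ℤ) (hu : |ν.1 + ν.2| ≤ (n:ℤ)) (hv : |ν.1 - ν.2| ≤ (n:ℤ)) :
    (ctilde n ν : ℂ) = wgt n (ν.1 + ν.2) * wgt n (ν.1 - ν.2) := by
  have h0 : (0:ℤ) ≤ n := Int.ofNat_nonneg n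
  rw [ctilde, wgt, wgt]
  by_cases hcu : ν.1 + ν.2 = (n:ℤ) ∨ ν.1 + ν.2 = -(n:ℤ) <;>
    by_cases hcv : ν.1 - ν.2 = (n:ℤ) ∨ ν.1 - ν.2 = -(n:ℤ)
  · have h1 : |ν.1 + ν.2| = (n:ℤ) := (abs_eq h0).mpr hcu
    have h2 : |ν.1 - ν.2| = (n:ℤ) := (abs_eq h0).mpr hcv
    rw [if_neg (by rw [h1]; exact fun h => lt_irrefl _ h.1), if_pos ⟨h1, h2⟩,
      if_pos hcu, if_pos hcv]
    norm_num
  · have h1 : |ν.1 + ν.2| = (n:ℤ) := (abs_eq h0).mpr hcu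
    have h2 : |ν.1 - ν.2| ≠ (n:ℤ) := fun h => hcv ((abs_eq h0).mp h)
    rw [if_neg (by rw [h1]; exact fun h => lt_irrefl _ h.1),
      if_neg (fun h => h2 h.2), if_pos hcu, if_neg hcv]
    norm_num
  · have h1 : |ν.1 + ν.2| ≠ (n:ℤ) := fun h => hcu ((abs_eq h0).mp h)
    have h2 : |ν.1 - ν.2| = (n:ℤ) := (abs_eq h0).mpr hcv
    rw [if_neg (by rw [h2]; exact fun h => lt_irrefl _ h.2),
      if_neg (fun h => h1 h.1), if_neg hcu, if_pos hcv]
    norm_num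
  · have h1 : |ν.1 + ν.2| < (n:ℤ) :=
      lt_of_le_of_ne hu (fun h => hcu ((abs_eq h0).mp h))
    have h2 : |ν.1 - ν.2| < (n:ℤ) :=
      lt_of_le_of_ne hv (fun h => hcv ((abs_eq h0).mp h))
    rw [if_pos ⟨h1, h2⟩, if_neg hcu, if_neg hcv]
    norm_num

-- the key reindexing

lemma inner_sum_eq {n : ℕ} (hn : 0 < n) (a b : ℤ) (d : ℤ × ℤ)
    (ha : d.1 = a + b) (hb : d.2 = a - b) :
    ∑ ν ∈ LamStar n, (ctilde n ν : ℂ) * e2 ν (pt2 n d)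
      = ∑ p ∈ (Finset.Icc (-(n:ℤ)) n ×ˢ Finset.Icc (-(n:ℤ)) n).filter
          (fun p => p.1 % 2 = p.2 % 2),
          (wgt n p.1 * (om n ^ a) ^ p.1) * (wgt n p.2 * (om n ^ b) ^ p.2) := by
  refine Finset.sum_nbij' (fun ν => (ν.1 + ν.2, ν.1 - ν.2))
    (fun p => ((p.1 + p.2)/2, (p.1 - p.2)/2)) ?_ ?_ ?_ ?_ ?_
  all_goals intro ν hν
  · simp only [LamStar, Finset.mem_filter, Finset.mem_Icc, Prod.le_def, abs_le] at hν
    simp only [Finset.mem_filter, Finset.mem_product, Finset.mem_Icc]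
    omega
  · simp only [Finset.mem_filter, Finset.mem_product, Finset.mem_Icc] at hν
    simp only [LamStar, Finset.mem_filter, Finset.mem_Icc, Prod.le_def, abs_le]
    omega
  · simp only [LamStar, Finset.mem_filter, Finset.mem_Icc, Prod.le_def, abs_le] at hν
    show ((((ν.1 + ν.2) + (ν.1 - ν.2))/2 : ℤ), (((ν.1 + ν.2) - (ν.1 - ν.2))/2 : ℤ)) = ν
    have e1 : ((ν.1 + ν.2) + (ν.1 - ν.2))/2 = ν.1 := by omega
    have e2 : ((ν.1 + ν.2) - (ν.1 - ν.2))/2 = ν.2 := by omega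
    rw [e1, e2]
  · simp only [Finset.mem_filter, Finset.mem_product, Finset.mem_Icc] at hν
    show (((ν.1 + ν.2)/2 + (ν.1 - ν.2)/2 : ℤ), ((ν.1 + ν.2)/2 - (ν.1 - ν.2)/2 : ℤ)) = ν
    have e1 : (ν.1 + ν.2)/2 + (ν.1 - ν.2)/2 = ν.1 := by omega
    have e2 : (ν.1 + ν.2)/2 - (ν.1 - ν.2)/2 = ν.2 := by omega
    rw [e1, e2]
  · simp only [LamStar, Finset.mem_filter, Finset.mem_Icc, Prod.le_def, abs_le] at hν
    show (ctilde n ν : ℂ) * e2 ν (pt2 n d)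
        = (wgt n (ν.1 + ν.2) * (om n ^ a) ^ (ν.1 + ν.2))
          * (wgt n (ν.1 - ν.2) * (om n ^ b) ^ (ν.1 - ν.2))
    rw [ctilde_eq_wgt ν (abs_le.mpr hν.2.1) (abs_le.mpr hν.2.2), e2_pt2 hn]
    have hexp : ν.1 * d.1 + ν.2 * d.2 = a * (ν.1 + ν.2) + b * (ν.1 - ν.2) := by
      rw [ha, hb]; ring
    rw [hexp, zpow_add₀ (om_ne_zero n), zpow_mul, zpow_mul]
    ring

lemma om_zpow_eq_one_iff {n : ℕ} (hn : 0 < n) (m : ℤ) :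
    om n ^ m = 1 ↔ (2 * (n:ℤ)) ∣ m := by
  rw [om_zpow, Complex.exp_eq_one_iff]
  have hπ : (Real.pi : ℂ) ≠ 0 := Complex.ofReal_ne_zero.mpr Real.pi_ne_zero
  have hn' : (n : ℂ) ≠ 0 := Nat.cast_ne_zero.mpr hn.ne'
  have hI : (Complex.I : ℂ) ≠ 0 := Complex.I_ne_zero
  constructor
  · rintro ⟨k, hk⟩
    refine ⟨k, ?_⟩
    field_simp at hk
    have h2 : (m : ℂ) * (Real.pi * Complex.I) = (2 * n * k) * (Real.pi * Complex.I) := by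
      linear_combination hk * (Real.pi * Complex.I)
    have := mul_right_cancel₀ (mul_ne_zero hπ hI) h2
    exact_mod_cast this
  · rintro ⟨k, rfl⟩
    exact ⟨k, by push_cast; field_simp⟩

lemma om_pow_n {n : ℕ} (hn : 0 < n) : om n ^ ((n:ℤ)) = -1 := by
  rw [om_zpow]
  have hn' : (n : ℂ) ≠ 0 := Nat.cast_ne_zero.mpr hn.ne'
  have h : ((n:ℤ) : ℂ) * (Real.pi * Complex.I / n) = Real.pi * Complex.I := by
    push_cast; field_simp
  rw [h, Complex.exp_pi_mul_I]

lemma filter_sum_eq (n : ℕ) (ζ₁ ζ₂ : ℂ) :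
    ∑ p ∈ (Finset.Icc (-(n:ℤ)) n ×ˢ Finset.Icc (-(n:ℤ)) n).filter
        (fun p => p.1 % 2 = p.2 % 2),
        (wgt n p.1 * ζ₁ ^ p.1) * (wgt n p.2 * ζ₂ ^ p.2)
      = (1/2) * (Fsum n ζ₁ * Fsum n ζ₂ + Fsum n (-ζ₁) * Fsum n (-ζ₂)) := by
  have hL : ∀ (z₁ z₂ : ℂ), Fsum n z₁ * Fsum n z₂
      = ∑ p ∈ Finset.Icc (-(n:ℤ)) n ×ˢ Finset.Icc (-(n:ℤ)) n,
          (wgt n p.1 * z₁ ^ p.1) * (wgt n p.2 * z₂ ^ p.2) := by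
    intro z₁ z₂
    rw [Fsum, Fsum, Finset.sum_mul_sum, ← Finset.sum_product']
  rw [Finset.sum_filter, hL, hL, ← Finset.sum_add_distrib, Finset.mul_sum]
  refine Finset.sum_congr rfl ?_
  intro p _
  rcases Int.even_or_odd p.1 with h1 | h1 <;> rcases Int.even_or_odd p.2 with h2 | h2
  · obtain ⟨r1, e1⟩ := h1
    obtain ⟨r2, e2⟩ := h2
    rw [Even.neg_zpow ⟨r1, e1⟩ ζ₁, Even.neg_zpow ⟨r2, e2⟩ ζ₂,
      if_pos (by omega : p.1 % 2 = p.2 % 2)]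
    ring
  · obtain ⟨r1, e1⟩ := h1
    obtain ⟨r2, e2⟩ := h2
    rw [Even.neg_zpow ⟨r1, e1⟩ ζ₁, Odd.neg_zpow ⟨r2, e2⟩ ζ₂,
      if_neg (by omega : ¬ p.1 % 2 = p.2 % 2)]
    ring
  · obtain ⟨r1, e1⟩ := h1
    obtain ⟨r2, e2⟩ := h2
    rw [Odd.neg_zpow ⟨r1, e1⟩ ζ₁, Even.neg_zpow ⟨r2, e2⟩ ζ₂,
      if_neg (by omega : ¬ p.1 % 2 = p.2 % 2)]
    ring
  · obtain ⟨r1, e1⟩ := h1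
    obtain ⟨r2, e2⟩ := h2
    rw [Odd.neg_zpow ⟨r1, e1⟩ ζ₁, Odd.neg_zpow ⟨r2, e2⟩ ζ₂,
      if_pos (by omega : p.1 % 2 = p.2 % 2)]
    ring

lemma Fsum_om {n : ℕ} (hn : 0 < n) (c : ℤ) :
    Fsum n (om n ^ c) = if (2*(n:ℤ)) ∣ c then 2*(n:ℂ) else 0 := by
  have hpow : (om n ^ c) ^ (2*n) = 1 := by
    rw [← zpow_natCast, ← zpow_mul, om_zpow_eq_one_iff hn]
    exact ⟨c, by push_cast; ring⟩
  rw [Fsum_eq hn _ hpow]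
  by_cases hc : (2*(n:ℤ)) ∣ c
  · rw [if_pos ((om_zpow_eq_one_iff hn c).mpr hc), if_pos hc]
  · rw [if_neg (fun h => hc ((om_zpow_eq_one_iff hn c).mp h)), if_neg hc]

lemma Fsum_neg_om {n : ℕ} (hn : 0 < n) (c : ℤ) :
    Fsum n (-(om n ^ c)) = if (2*(n:ℤ)) ∣ (c - n) then 2*(n:ℂ) else 0 := by
  have hneg : om n ^ (c - (n:ℤ)) = -(om n ^ c) := by
    rw [zpow_sub₀ (om_ne_zero n), om_pow_n hn]
    field_simp
  have hpow : (-(om n ^ c)) ^ (2*n) = 1 := by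
    rw [← hneg, ← zpow_natCast, ← zpow_mul, om_zpow_eq_one_iff hn]
    exact ⟨c - n, by push_cast; ring⟩
  rw [Fsum_eq hn _ hpow]
  by_cases hc : (2*(n:ℤ)) ∣ (c - n)
  · rw [if_pos (by rw [← hneg]; exact (om_zpow_eq_one_iff hn _).mpr hc), if_pos hc]
  · rw [if_neg (fun h => hc ((om_zpow_eq_one_iff hn _).mp (hneg ▸ h))), if_neg hc]

lemma PhiStar_eval {n : ℕ} (hn : 0 < n) (d : ℤ × ℤ) (hpar : d.1 % 2 = d.2 % 2) :
    PhiStar n (pt2 n d) = if (2*(n:ℤ)) ∣ d.1 ∧ (2*(n:ℤ)) ∣ d.2 then 1 else 0 := by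
  obtain ⟨a, b, ha, hb⟩ : ∃ a b : ℤ, d.1 = a + b ∧ d.2 = a - b :=
    ⟨(d.1 + d.2)/2, (d.1 - d.2)/2, by omega, by omega⟩
  have hn' : (n : ℂ) ≠ 0 := Nat.cast_ne_zero.mpr hn.ne'
  rw [PhiStar, inner_sum_eq hn a b d ha hb, filter_sum_eq, Fsum_om hn, Fsum_om hn,
    Fsum_neg_om hn, Fsum_neg_om hn]
  have h2n : (0:ℤ) < 2*n := by omega
  by_cases hmain : (2*(n:ℤ)) ∣ d.1 ∧ (2*(n:ℤ)) ∣ d.2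
  · rw [if_pos hmain]
    obtain ⟨h1, h2⟩ := hmain
    rw [ha] at h1; rw [hb] at h2
    have h2a : (2*(n:ℤ)) ∣ 2*a := by
      have h := dvd_add h1 h2
      have e : (a + b) + (a - b) = 2*a := by ring
      rwa [e] at h
    by_cases hA : (2*(n:ℤ)) ∣ a
    · have hB : (2*(n:ℤ)) ∣ b := by
        have h := dvd_sub h1 hA
        have e : (a + b) - a = b := by ring
        rwa [e] at h
      have hnC : ¬ (2*(n:ℤ)) ∣ (a - n) := by
        intro hC
        have h := dvd_sub hA hC
        have e : a - (a - n) = (n:ℤ) := by ring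
        rw [e] at h
        have := Int.le_of_dvd (by omega) h
        omega
      rw [if_pos hA, if_pos hB, if_neg hnC]
      field_simp
      ring
    · obtain ⟨c, hc⟩ := h2a
      have hac : a = n * c := by linarith
      have hcodd : Odd c := by
        rcases Int.even_or_odd c with ⟨e, he⟩ | ho
        · exfalso; exact hA ⟨e, by rw [hac, he]; ring⟩
        · exact ho
      obtain ⟨e, he⟩ := hcodd
      have hC : (2*(n:ℤ)) ∣ (a - n) := ⟨e, by rw [hac, he]; ring⟩
      have hD : (2*(n:ℤ)) ∣ (b - n) := by
        have h := dvd_sub h1 hC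
        have e2 : (a + b) - (a - n) = b + n := by ring
        rw [e2] at h
        have h' := dvd_sub h (dvd_refl (2*(n:ℤ)))
        have e3 : (b + n) - (2*(n:ℤ)) = b - n := by ring
        rwa [e3] at h'
      rw [if_neg hA, if_pos hC, if_pos hD]
      field_simp
      ring
  · rw [if_neg hmain]
    have hns : ¬((2*(n:ℤ)) ∣ a ∧ (2*(n:ℤ)) ∣ b) := by
      rintro ⟨x, y⟩
      exact hmain ⟨ha ▸ dvd_add x y, hb ▸ dvd_sub x y⟩
    have hns2 : ¬((2*(n:ℤ)) ∣ (a - n) ∧ (2*(n:ℤ)) ∣ (b - n)) := by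
      rintro ⟨x, y⟩
      refine hmain ⟨?_, ?_⟩
      · have h := dvd_add (dvd_add x y) (dvd_refl (2*(n:ℤ)))
        have e : (a - n) + (b - n) + 2*(n:ℤ) = a + b := by ring
        rw [e] at h
        rwa [ha]
      · have h := dvd_sub x y
        have e : (a - n) - (b - n) = a - b := by ring
        rw [e] at h
        rwa [hb]
    split_ifs with hA hB hC hD <;>
      first
      | (exfalso; exact hns ⟨by assumption, by assumption⟩)
      | (exfalso; exact hns2 ⟨by assumption, by assumption⟩)
      | ring

lemma dvd_small {N x : ℤ} (hN : 0 < N) (h : N ∣ x) (hx : |x| ≤ N) :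
    x = 0 ∨ x = N ∨ x = -N := by
  obtain ⟨c, rfl⟩ := h
  have h1 : |N * c| = N * |c| := by rw [abs_mul, abs_of_pos hN]
  have h2 : N * |c| ≤ N * 1 := by rw [← h1, mul_one]; exact hx
  have h3 : |c| ≤ 1 := le_of_mul_le_mul_left h2 hN
  have h3' := abs_le.mp h3
  have h4 : c = 0 ∨ c = 1 ∨ c = -1 := by omega
  rcases h4 with rfl | rfl | rfl
  · left; ring
  · right; left; ring
  · right; right; ring

lemma mem_X2star_iff {n : ℕ} (k : ℤ × ℤ) :
    k ∈ X2star n ↔ (-(n:ℤ) ≤ k.1 ∧ k.1 ≤ n ∧ -(n:ℤ) ≤ k.2 ∧ k.2 ≤ n ∧ k.1 % 2 = k.2 % 2) := by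
  simp only [X2star, Finset.mem_filter, Finset.mem_Icc, Prod.le_def]
  tauto

theorem symmetric_trig_interpolation_2d (n : ℕ) (hn : 0 < n) (f : ℝ × ℝ → ℂ)
    (j : ℤ × ℤ) (hj : j ∈ X2star n) :
    (|j.1| < (n : ℤ) ∧ |j.2| < (n : ℤ) → Istar2 n f (pt2 n j) = f (pt2 n j)) ∧
    (((|j.1| = (n : ℤ) ∧ |j.2| < (n : ℤ)) ∨ (|j.1| < (n : ℤ) ∧ |j.2| = (n : ℤ))) →
      ∀ j' ∈ X2star n, j' ≠ j →
        (2 * (n : ℤ)) ∣ j'.1 - j.1 → (2 * (n : ℤ)) ∣ j'.2 - j.2 →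
          Istar2 n f (pt2 n j) = f (pt2 n j) + f (pt2 n j')) ∧
    (|j.1| = (n : ℤ) ∧ |j.2| = (n : ℤ) →
      Istar2 n f (pt2 n j)
        = f (pt2 n ((n : ℤ), (n : ℤ))) + f (pt2 n (-(n : ℤ), (n : ℤ)))
          + f (pt2 n ((n : ℤ), -(n : ℤ))) + f (pt2 n (-(n : ℤ), -(n : ℤ)))) := by
  rw [mem_X2star_iff] at hj
  have h2n : (0:ℤ) < 2*n := by omega
  have hpt : ∀ k : ℤ × ℤ, pt2 n j - pt2 n k = pt2 n (j - k) := by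
    intro k
    simp only [pt2, Prod.mk_sub_mk, Prod.mk.injEq, Prod.fst_sub, Prod.snd_sub]
    constructor <;> push_cast <;> ring
  have hIs : Istar2 n f (pt2 n j)
      = ∑ k ∈ (X2star n).filter
          (fun k => (2*(n:ℤ)) ∣ j.1 - k.1 ∧ (2*(n:ℤ)) ∣ j.2 - k.2), f (pt2 n k) := by
    rw [Istar2, Finset.sum_filter]
    refine Finset.sum_congr rfl ?_
    intro k hk
    rw [mem_X2star_iff] at hk
    rw [hpt k, PhiStar_eval hn (j - k) (by simp only [Prod.fst_sub, Prod.snd_sub]; omega)]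
    simp only [Prod.fst_sub, Prod.snd_sub]
    by_cases hc : (2*(n:ℤ)) ∣ j.1 - k.1 ∧ (2*(n:ℤ)) ∣ j.2 - k.2
    · rw [if_pos hc, if_pos hc, mul_one]
    · rw [if_neg hc, if_neg hc, mul_zero]
  refine ⟨?_, ?_, ?_⟩
  · rintro ⟨h1, h2⟩
    rw [abs_lt] at h1 h2
    rw [hIs]
    have hfil : (X2star n).filter
        (fun k => (2*(n:ℤ)) ∣ j.1 - k.1 ∧ (2*(n:ℤ)) ∣ j.2 - k.2) = {j} := by
      ext k
      simp only [Finset.mem_filter, Finset.mem_singleton, mem_X2star_iff]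
      constructor
      · rintro ⟨hk, hd1, hd2⟩
        have e1 : j.1 - k.1 = 0 :=
          Int.eq_zero_of_abs_lt_dvd hd1 (abs_lt.mpr ⟨by omega, by omega⟩)
        have e2 : j.2 - k.2 = 0 :=
          Int.eq_zero_of_abs_lt_dvd hd2 (abs_lt.mpr ⟨by omega, by omega⟩)
        rw [Prod.ext_iff]
        omega
      · rintro rfl
        exact ⟨⟨by omega, by omega, by omega, by omega, hj.2.2.2.2⟩,
          by simp, by simp⟩
    rw [hfil, Finset.sum_singleton]
  · intro hcase j' hj' hne hd1 hd2
    rw [mem_X2star_iff] at hj'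
    rw [hIs]
    have hne' : ¬(j'.1 = j.1 ∧ j'.2 = j.2) := by
      intro h; exact hne (Prod.ext_iff.mpr ⟨h.1, h.2⟩)
    have t1 : j'.1 - j.1 = 0 ∨ j'.1 - j.1 = 2*n ∨ j'.1 - j.1 = -(2*n) :=
      dvd_small h2n hd1 (abs_le.mpr ⟨by omega, by omega⟩)
    have t2 : j'.2 - j.2 = 0 ∨ j'.2 - j.2 = 2*n ∨ j'.2 - j.2 = -(2*n) :=
      dvd_small h2n hd2 (abs_le.mpr ⟨by omega, by omega⟩)
    have hcase' : (j.1 = n ∨ j.1 = -(n:ℤ)) ∧ (-(n:ℤ) < j.2 ∧ j.2 < n)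
        ∨ (-(n:ℤ) < j.1 ∧ j.1 < n) ∧ (j.2 = n ∨ j.2 = -(n:ℤ)) := by
      rcases hcase with ⟨ha, hb⟩ | ⟨ha, hb⟩
      · exact Or.inl ⟨(abs_eq (by omega)).mp ha, abs_lt.mp hb⟩
      · exact Or.inr ⟨abs_lt.mp ha, (abs_eq (by omega)).mp hb⟩
    have hfil : (X2star n).filter
        (fun k => (2*(n:ℤ)) ∣ j.1 - k.1 ∧ (2*(n:ℤ)) ∣ j.2 - k.2) = {j, j'} := by
      ext k
      simp only [Finset.mem_filter, Finset.mem_insert, Finset.mem_singleton,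
        mem_X2star_iff, Prod.ext_iff]
      constructor
      · rintro ⟨hk, hkd1, hkd2⟩
        have s1 : j.1 - k.1 = 0 ∨ j.1 - k.1 = 2*n ∨ j.1 - k.1 = -(2*n) :=
          dvd_small h2n hkd1 (abs_le.mpr ⟨by omega, by omega⟩)
        have s2 : j.2 - k.2 = 0 ∨ j.2 - k.2 = 2*n ∨ j.2 - k.2 = -(2*n) :=
          dvd_small h2n hkd2 (abs_le.mpr ⟨by omega, by omega⟩)
        omega
      · rintro (⟨e1, e2⟩ | ⟨e1, e2⟩)
        · refine ⟨⟨by omega, by omega, by omega, by omega, by omega⟩, ?_, ?_⟩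
          · rw [e1]; simp
          · rw [e2]; simp
        · refine ⟨⟨by omega, by omega, by omega, by omega, by omega⟩, ?_, ?_⟩
          · rw [e1]; exact (dvd_sub_comm).mp hd1
          · rw [e2]; exact (dvd_sub_comm).mp hd2
    rw [hfil, Finset.sum_pair (fun h => hne h.symm)]
  · rintro ⟨h1, h2⟩
    rw [hIs]
    have hj1 : j.1 = n ∨ j.1 = -(n:ℤ) := (abs_eq (by omega)).mp h1
    have hj2 : j.2 = n ∨ j.2 = -(n:ℤ) := (abs_eq (by omega)).mp h2
    have hfil : (X2star n).filter
        (fun k => (2*(n:ℤ)) ∣ j.1 - k.1 ∧ (2*(n:ℤ)) ∣ j.2 - k.2)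
        = {((n:ℤ), (n:ℤ)), (-(n:ℤ), (n:ℤ)), ((n:ℤ), -(n:ℤ)), (-(n:ℤ), -(n:ℤ))} := by
      ext k
      simp only [Finset.mem_filter, Finset.mem_insert, Finset.mem_singleton,
        mem_X2star_iff, Prod.ext_iff]
      constructor
      · rintro ⟨hk, hkd1, hkd2⟩
        have s1 : j.1 - k.1 = 0 ∨ j.1 - k.1 = 2*n ∨ j.1 - k.1 = -(2*n) :=
          dvd_small h2n hkd1 (abs_le.mpr ⟨by omega, by omega⟩)
        have s2 : j.2 - k.2 = 0 ∨ j.2 - k.2 = 2*n ∨ j.2 - k.2 = -(2*n) :=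
          dvd_small h2n hkd2 (abs_le.mpr ⟨by omega, by omega⟩)
        omega
      · intro hmem
        have hb : (-(n:ℤ) ≤ k.1 ∧ k.1 ≤ n ∧ -(n:ℤ) ≤ k.2 ∧ k.2 ≤ n ∧ k.1 % 2 = k.2 % 2)
            ∧ (j.1 - k.1 = 0 ∨ j.1 - k.1 = 2*n ∨ j.1 - k.1 = -(2*n))
            ∧ (j.2 - k.2 = 0 ∨ j.2 - k.2 = 2*n ∨ j.2 - k.2 = -(2*n)) := by omega
        refine ⟨hb.1, ?_, ?_⟩
        · rcases hb.2.1 with h | h | h <;> rw [h] <;> simp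
        · rcases hb.2.2 with h | h | h <;> rw [h] <;> simp
    rw [hfil]
    have d1 : ((n:ℤ), (n:ℤ)) ∉ ({(-(n:ℤ), (n:ℤ)), ((n:ℤ), -(n:ℤ)), (-(n:ℤ), -(n:ℤ))} : Finset (ℤ × ℤ)) := by
      simp only [Finset.mem_insert, Finset.mem_singleton, Prod.ext_iff]; omega
    have d2 : (-(n:ℤ), (n:ℤ)) ∉ ({((n:ℤ), -(n:ℤ)), (-(n:ℤ), -(n:ℤ))} : Finset (ℤ × ℤ)) := by
      simp only [Finset.mem_insert, Finset.mem_singleton, Prod.ext_iff]; omega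
    have d3 : ((n:ℤ), -(n:ℤ)) ∉ ({(-(n:ℤ), -(n:ℤ))} : Finset (ℤ × ℤ)) := by
      simp only [Finset.mem_singleton, Prod.ext_iff]; omega
    rw [Finset.sum_insert d1, Finset.sum_insert d2, Finset.sum_insert d3, Finset.sum_singleton]
    ring
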